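/- The point β* = √2/4 is a global minimizer of g over ℝ, with minimal value g(√2/4) = (2 - √2)/48; i.e., for all β ∈ ℝ, g(β) ≥ (2 - √2)/48. -/

import Mathlib

open MeasureTheory Real intervalIntegral

lemma intquad (a c p : ℝ) : ∫ t in a..c, t * (t - p) = (c^3 - a^3)/3 - p*(c^2 - a^2)/2 := by
  have h : (fun t : ℝ => t * (t - p)) = fun t => t^2 - p * t := by funext t; ring
  rw [h, integral_sub ((continuous_pow 2).intervalIntegrable _ _)
    (Continuous.intervalIntegrable (by fun_prop) _ _ : IntervalIntegrable (fun t : ℝ => p * t) volume a c),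
    integral_pow, intervalIntegral.integral_const_mul, integral_id]
  norm_num; ring

lemma intquad2 (a c p : ℝ) : ∫ t in a..c, (t - p) * (1 - t)
    = (1+p)*(c^2 - a^2)/2 - (c^3 - a^3)/3 - p*(c - a) := by
  have h : (fun t : ℝ => (t - p) * (1 - t)) = fun t => (1+p) * t - t^2 - p := by funext t; ring
  rw [h, integral_sub (Continuous.intervalIntegrable (by fun_prop) _ _ : IntervalIntegrable (fun t : ℝ => (1+p) * t - t^2) volume a c)
    (intervalIntegrable_const),
    integral_sub (Continuous.intervalIntegrable (by fun_prop) _ _ : IntervalIntegrable (fun t : ℝ => (1+p) * t) volume a c)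
      ((continuous_pow 2).intervalIntegrable _ _),
    integral_pow, intervalIntegral.integral_const_mul, integral_id, intervalIntegral.integral_const]
  norm_num; ring

theorem stmt_3 :
    (((1/2) * ∫ t in (0:ℝ)..(1/2), t * |t - Real.sqrt 2 / 4|) +
      ((1/2) * ∫ t in (1/2:ℝ)..1, |t - 1 + Real.sqrt 2 / 4| * (1 - t))
        = (2 - Real.sqrt 2) / 48) ∧
    ∀ β : ℝ,
      ((1/2) * ∫ t in (0:ℝ)..(1/2), t * |t - β|) +
        ((1/2) * ∫ t in (1/2:ℝ)..1, |t - 1 + β| * (1 - t))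
          ≥ (2 - Real.sqrt 2) / 48 := by
  have hs : Real.sqrt 2 ^ 2 = 2 := Real.sq_sqrt (by norm_num)
  have hsnn : 0 ≤ Real.sqrt 2 := Real.sqrt_nonneg 2
  have hs2 : Real.sqrt 2 ≤ 2 := by nlinarith
  set b : ℝ := Real.sqrt 2 / 4 with hbdef
  have hb0 : 0 ≤ b := by positivity
  have hb : b ≤ 1/2 := by rw [hbdef]; linarith
  have hc1 : (1:ℝ)/2 ≤ 1 - b := by linarith
  have hc2 : 1 - b ≤ 1 := by linarith
  -- integrability of the |·| integrands
  have ib : ∀ (β a c : ℝ), IntervalIntegrable (fun t => t * |t - β|) volume a c := by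
    intro β a c
    exact (continuous_id.mul ((continuous_id.sub continuous_const).abs)).intervalIntegrable _ _
  have ib2 : ∀ (β a c : ℝ), IntervalIntegrable (fun t => |t - 1 + β| * (1 - t)) volume a c := by
    intro β a c
    exact (((continuous_id.sub continuous_const).add continuous_const).abs.mul
      (continuous_const.sub continuous_id)).intervalIntegrable _ _
  have split1 : ∀ β : ℝ, (∫ t in (0:ℝ)..(1/2), t * |t - β|)
      = (∫ t in (0:ℝ)..b, t * |t - β|) + ∫ t in b..(1/2:ℝ), t * |t - β| :=
    fun β => (integral_add_adjacent_intervals (ib β 0 b) (ib β b (1/2))).symm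
  have split2 : ∀ β : ℝ, (∫ t in (1/2:ℝ)..1, |t - 1 + β| * (1 - t))
      = (∫ t in (1/2:ℝ)..(1-b), |t - 1 + β| * (1 - t)) + ∫ t in (1-b:ℝ)..1, |t - 1 + β| * (1 - t) :=
    fun β => (integral_add_adjacent_intervals (ib2 β (1/2) (1-b)) (ib2 β (1-b) 1)).symm
  constructor
  · -- equality at b
    have e1 : (∫ t in (0:ℝ)..b, t * |t - b|) = -((b^3 - 0^3)/3 - b*(b^2 - 0^2)/2) := by
      rw [show (∫ t in (0:ℝ)..b, t * |t - b|) = ∫ t in (0:ℝ)..b, -(t * (t - b)) from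
        integral_congr (fun t ht => by
          rw [Set.uIcc_of_le hb0] at ht
          rw [abs_of_nonpos (by linarith [ht.2])]; ring),
        intervalIntegral.integral_neg, intquad]
    have e2 : (∫ t in b..(1/2:ℝ), t * |t - b|) = ((1/2:ℝ)^3 - b^3)/3 - b*((1/2:ℝ)^2 - b^2)/2 := by
      rw [show (∫ t in b..(1/2:ℝ), t * |t - b|) = ∫ t in b..(1/2:ℝ), t * (t - b) from
        integral_congr (fun t ht => by
          rw [Set.uIcc_of_le hb] at ht
          rw [abs_of_nonneg (by linarith [ht.1])]),
        intquad]
    have e3 : (∫ t in (1/2:ℝ)..(1-b), |t - 1 + b| * (1 - t))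
        = -((1+(1-b))*((1-b)^2 - (1/2:ℝ)^2)/2 - ((1-b)^3 - (1/2:ℝ)^3)/3 - (1-b)*((1-b) - 1/2)) := by
      rw [show (∫ t in (1/2:ℝ)..(1-b), |t - 1 + b| * (1 - t))
          = ∫ t in (1/2:ℝ)..(1-b), -((t - (1-b)) * (1 - t)) from
        integral_congr (fun t ht => by
          rw [Set.uIcc_of_le hc1] at ht
          rw [abs_of_nonpos (by linarith [ht.2])]; ring),
        intervalIntegral.integral_neg, intquad2]
    have e4 : (∫ t in (1-b:ℝ)..1, |t - 1 + b| * (1 - t))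
        = (1+(1-b))*(1^2 - (1-b)^2)/2 - (1^3 - (1-b)^3)/3 - (1-b)*(1 - (1-b)) := by
      rw [show (∫ t in (1-b:ℝ)..1, |t - 1 + b| * (1 - t))
          = ∫ t in (1-b:ℝ)..1, (t - (1-b)) * (1 - t) from
        integral_congr (fun t ht => by
          rw [Set.uIcc_of_le hc2] at ht
          rw [abs_of_nonneg (by linarith [ht.1])]; ring),
        intquad2]
    rw [split1 b, split2 b, e1, e2, e3, e4, hbdef]
    linear_combination (Real.sqrt 2 / 192) * hs
  · intro β
    have L1 : -((b^3 - 0^3)/3 - β*(b^2 - 0^2)/2) ≤ ∫ t in (0:ℝ)..b, t * |t - β| := by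
      have h := integral_mono_on hb0
        ((Continuous.intervalIntegrable (by fun_prop) _ _ :
          IntervalIntegrable (fun t : ℝ => -(t * (t - β))) volume 0 b)) (ib β 0 b)
        (fun t ht => by
          have h1 := le_abs_self (β - t)
          have h2 : |β - t| = |t - β| := abs_sub_comm β t
          nlinarith [ht.1])
      rwa [intervalIntegral.integral_neg, intquad] at h
    have L2 : ((1/2:ℝ)^3 - b^3)/3 - β*((1/2:ℝ)^2 - b^2)/2 ≤ ∫ t in b..(1/2:ℝ), t * |t - β| := by
      have h := integral_mono_on hb
        ((Continuous.intervalIntegrable (by fun_prop) _ _ :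
          IntervalIntegrable (fun t : ℝ => t * (t - β)) volume b (1/2))) (ib β b (1/2))
        (fun t ht => by
          have h1 := le_abs_self (t - β)
          nlinarith [ht.1, hb0])
      rwa [intquad] at h
    have L3 : -((1+(1-β))*((1-b)^2 - (1/2:ℝ)^2)/2 - ((1-b)^3 - (1/2:ℝ)^3)/3 - (1-β)*((1-b) - 1/2))
        ≤ ∫ t in (1/2:ℝ)..(1-b), |t - 1 + β| * (1 - t) := by
      have h := integral_mono_on hc1
        ((Continuous.intervalIntegrable (by fun_prop) _ _ :
          IntervalIntegrable (fun t : ℝ => -((t - (1-β)) * (1 - t))) volume (1/2) (1-b))) (ib2 β (1/2) (1-b))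
        (fun t ht => by
          have h1 := neg_le_abs (t - 1 + β)
          have h2 : (1:ℝ) - t ≥ 0 := by linarith [ht.2]
          nlinarith)
      rwa [intervalIntegral.integral_neg, intquad2] at h
    have L4 : (1+(1-β))*(1^2 - (1-b)^2)/2 - (1^3 - (1-b)^3)/3 - (1-β)*(1 - (1-b))
        ≤ ∫ t in (1-b:ℝ)..1, |t - 1 + β| * (1 - t) := by
      have h := integral_mono_on hc2
        ((Continuous.intervalIntegrable (by fun_prop) _ _ :
          IntervalIntegrable (fun t : ℝ => (t - (1-β)) * (1 - t)) volume (1-b) 1)) (ib2 β (1-b) 1)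
        (fun t ht => by
          have h1 := le_abs_self (t - 1 + β)
          have h2 : (1:ℝ) - t ≥ 0 := by linarith [ht.2]
          nlinarith)
      rwa [intquad2] at h
    have key : (1/2) * (-((b^3 - 0^3)/3 - β*(b^2 - 0^2)/2)
        + (((1/2:ℝ)^3 - b^3)/3 - β*((1/2:ℝ)^2 - b^2)/2))
      + (1/2) * (-((1+(1-β))*((1-b)^2 - (1/2:ℝ)^2)/2 - ((1-b)^3 - (1/2:ℝ)^3)/3 - (1-β)*((1-b) - 1/2))
        + ((1+(1-β))*(1^2 - (1-b)^2)/2 - (1^3 - (1-b)^3)/3 - (1-β)*(1 - (1-b))))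
      = (2 - Real.sqrt 2) / 48 := by
      rw [hbdef]
      linear_combination (β/16 - Real.sqrt 2/96) * hs
    rw [ge_iff_le, split1 β, split2 β, ← key]
    linarith
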